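/- Define s(n) as the maximum integer s such that there exist positive integers a, b with n = a·f_{s-1} + b·f_{s-2}. If (b,a) achieves this maximum (i.e., n = a·f_{s(n)-1} + b·f_{s(n)-2} with a,b ≥ 1), then a ≤ b. -/
import Mathlib


/-- `n` can be reached in `s` steps: `n = a·f_{s-1} + b·f_{s-2}` with `a, b ≥ 1`. -/
def reaches (n : ℤ) (s : ℕ) : Prop :=
  ∃ a b : ℤ, 1 ≤ a ∧ 1 ≤ b ∧ n = a * (Nat.fib (s - 1) : ℤ) + b * (Nat.fib (s - 2) : ℤ)

/-- `s = s(n)` is the maximum number of steps. -/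
def isSlow (n : ℤ) (s : ℕ) : Prop :=
  reaches n s ∧ ∀ s', reaches n s' → s' ≤ s

theorem stmt2 (n : ℤ) (hn : 2 ≤ n) (s : ℕ) (hs : isSlow n s) (a b : ℤ)
    (ha : 1 ≤ a) (hb : 1 ≤ b)
    (h : n = a * (Nat.fib (s - 1) : ℤ) + b * (Nat.fib (s - 2) : ℤ)) :
    a ≤ b := by
  obtain ⟨-, hmax⟩ := hs
  have hs3 : 3 ≤ s := by
    apply hmax 3
    exact ⟨n - 1, 1, by omega, le_refl 1, by simp [Nat.fib]⟩
  by_contra hab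
  push_neg at hab
  have : reaches n (s + 1) := by
    refine ⟨b, a - b, hb, by omega, ?_⟩
    obtain ⟨k, rfl⟩ : ∃ k, s = k + 3 := ⟨s - 3, by omega⟩
    have hfib : (Nat.fib (k + 2) : ℤ) = Nat.fib (k + 1) + Nat.fib k := by
      rw [Nat.fib_add_two]; push_cast; ring
    simp only [show k + 3 + 1 - 1 = k + 3 from rfl, show k + 3 + 1 - 2 = k + 2 from rfl,
      show k + 3 - 1 = k + 2 from rfl, show k + 3 - 2 = k + 1 from rfl] at *
    have hfib2 : (Nat.fib (k + 3) : ℤ) = Nat.fib (k + 2) + Nat.fib (k + 1) := by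
      rw [Nat.fib_add_two]; push_cast; ring
    rw [h, hfib2]; ring
  have := hmax _ this
  omega
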